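/- Let Θ ⊂ ℝ be a finite nonempty set with 0 < |θ̄| < π for every θ̄ ∈ Θ, and let θ̄_M = max_{θ̄∈Θ} |θ̄|. Assume 0 < γ_θ < 4·r_o·‖p_d − p_o‖/π². Then for every p ∈ X_p with p ≠ p_d that is a critical point of V_nav (i.e. p − p_d + ϱ·φ'(d_o(p))·(p − p_o)/‖p − p_o‖ = 0), one has 𝒱_nav(p,0) − min_{θ̄∈Θ} 𝒱_nav(p,θ̄) > (2·r_o·‖p_d − p_o‖/π² − γ_θ/2)·θ̄_M², i.e. 𝒱_nav is a synergistic navigation function relative to (p_d,0) with gap exceeding δ*_𝒱 = (2·r_o·‖p_d − p_o‖/π² − γ_θ/2)·θ̄_M². -/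

import Mathlib

open Real Filter
open scoped RealInnerProductSpace Topology Matrix

noncomputable section

/-- The Euclidean plane. -/
abbrev E2 : Type := EuclideanSpace ℝ (Fin 2)

/-- The planar rotation matrix `R(θ)`. -/
def RotM (θ : ℝ) : Matrix (Fin 2) (Fin 2) ℝ :=
  !![Real.cos θ, -Real.sin θ; Real.sin θ, Real.cos θ]

/-- The matrix `Δ = [[0,-1],[1,0]]`. -/
def DeltaM : Matrix (Fin 2) (Fin 2) ℝ := !![0, -1; 1, 0]

/-- Reinterpret a plain vector as a point of the Euclidean plane. -/
def toE2 (v : Fin 2 → ℝ) : E2 := (WithLp.equiv 2 (Fin 2 → ℝ)).symm v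

/-- Reinterpret a point of the Euclidean plane as a plain vector. -/
def fromE2 (p : E2) : Fin 2 → ℝ := WithLp.equiv 2 (Fin 2 → ℝ) p

/-- A `2×2` matrix acting on a point of the Euclidean plane. -/
def mulV (M : Matrix (Fin 2) (Fin 2) ℝ) (p : E2) : E2 := toE2 (M.mulVec (fromE2 p))

/-- The barrier function `φ`. -/
def phi (rs z : ℝ) : ℝ := if z ≤ rs then (z - rs) ^ 2 * Real.log (rs / z) else 0

/-- The derivative `φ'` of the barrier function. -/
def phi' (rs z : ℝ) : ℝ :=
  if z ≤ rs then 2 * (z - rs) * Real.log (rs / z) - (z - rs) ^ 2 / z else 0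

/-- Distance to the obstacle, `d_o(p) = ‖p - p_o‖ - r_o`. -/
def dO (po : E2) (ro : ℝ) (p : E2) : ℝ := ‖p - po‖ - ro

/-- The free space `X_p = {p : ‖p - p_o‖ ≥ r_o + ε}`. -/
def Xp (po : E2) (ro ε : ℝ) : Set E2 := {p | ro + ε ≤ ‖p - po‖}

/-- The navigation function `V_nav`. -/
def Vnav (po pd : E2) (ro ϱ rs : ℝ) (p : E2) : ℝ :=
  (1 / 2) * ‖p - pd‖ ^ 2 + ϱ * phi rs (dO po ro p)

/-- The gradient `∇V_nav(p) = p - p_d + ϱ φ'(d_o(p)) (p - p_o)/‖p - p_o‖`. -/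
def gradVnav (po pd : E2) (ro ϱ rs : ℝ) (p : E2) : E2 :=
  (p - pd) + ((ϱ * phi' rs (dO po ro p)) / ‖p - po‖) • (p - po)

/-- The transformation `T(p,θ) = p_o + R(θ)(p - p_o)`. -/
def Tmap (po : E2) (p : E2) (θ : ℝ) : E2 := po + mulV (RotM θ) (p - po)

/-- The modified navigation function `𝒱_nav`. -/
def Vnav2 (po pd : E2) (ro ϱ rs γθ : ℝ) (p : E2) (θ : ℝ) : ℝ :=
  (1 / 2) * ‖Tmap po p θ - pd‖ ^ 2 + ϱ * phi rs (dO po ro p) + (γθ / 2) * θ ^ 2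

/-- The map `σ(θ) = (I₂ - R(θ))ᵀ (p_o - p_d)`. -/
def sigmaFn (po pd : E2) (θ : ℝ) : E2 := mulV ((1 - RotM θ)ᵀ) (po - pd)

-- auxiliary lemmas

lemma aux_inner_rot (θ : ℝ) (x y : E2) :
    ⟪mulV (RotM θ) x, y⟫ =
      Real.cos θ * (x 0 * y 0 + x 1 * y 1) + Real.sin θ * (x 0 * y 1 - x 1 * y 0) := by
  simp [PiLp.inner_apply, Fin.sum_univ_two, mulV, toE2, fromE2, RotM,
    Matrix.mulVec, dotProduct, RCLike.inner_apply, Matrix.vecHead, Matrix.vecTail]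
  ring

lemma aux_inner_rot_self (θ : ℝ) (x : E2) :
    ⟪mulV (RotM θ) x, mulV (RotM θ) x⟫ = x 0 ^ 2 + x 1 ^ 2 := by
  simp [PiLp.inner_apply, Fin.sum_univ_two, mulV, toE2, fromE2, RotM,
    Matrix.mulVec, dotProduct, RCLike.inner_apply, Matrix.vecHead, Matrix.vecTail,
    -real_inner_self_eq_norm_sq, EuclideanSpace.norm_sq_eq]
  nlinarith [sin_sq_add_cos_sq θ]

lemma aux_normsq_coord (x : E2) : ‖x‖ ^ 2 = x 0 ^ 2 + x 1 ^ 2 := by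
  rw [← real_inner_self_eq_norm_sq]
  simp [PiLp.inner_apply, Fin.sum_univ_two, RCLike.inner_apply, -real_inner_self_eq_norm_sq,
    EuclideanSpace.norm_sq_eq]

lemma aux_phi'_nonpos (rs z : ℝ) (hz : 0 < z) : phi' rs z ≤ 0 := by
  unfold phi'
  split
  · rename_i h
    have hlog : 0 ≤ Real.log (rs / z) := by
      apply Real.log_nonneg
      rw [le_div_iff₀ hz]; linarith
    have h1 : 2 * (z - rs) * Real.log (rs / z) ≤ 0 :=
      mul_nonpos_of_nonpos_of_nonneg (by linarith) hlog
    have h2 : 0 ≤ (z - rs) ^ 2 / z := div_nonneg (sq_nonneg _) hz.le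
    linarith
  · exact le_refl 0

lemma aux_jordan (t : ℝ) (h0 : 0 ≤ t) (h1 : t ≤ π) : 2 * t ^ 2 / π ^ 2 ≤ 1 - Real.cos t := by
  have hs : 2 / π * (t / 2) ≤ Real.sin (t / 2) :=
    Real.mul_le_sin (by linarith) (by linarith)
  have hπ : 0 < π := Real.pi_pos
  have hct : Real.cos t = 2 * Real.cos (t/2) ^ 2 - 1 := by
    rw [show t = 2 * (t/2) by ring, Real.cos_two_mul]; norm_num
  have hpy := Real.sin_sq_add_cos_sq (t/2)
  have hnn : 0 ≤ 2 / π * (t / 2) := by positivity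
  have hmul := mul_self_le_mul_self hnn hs
  have h2 : (2 / π * (t/2)) * (2 / π * (t/2)) = t^2/π^2 := by field_simp
  have key : t^2/π^2 ≤ Real.sin (t/2) ^ 2 := by rw [← h2]; nlinarith
  have h3 : 2 * t ^ 2 / π ^ 2 = 2 * (t^2/π^2) := by ring
  rw [h3]; nlinarith


/-- With `Θ` finite nonempty, `0 < |θ̄| < π` on `Θ`, `θ̄_M` the max of `|θ̄|`,
and `0 < γ_θ < 4 r_o ‖p_d - p_o‖ / π²`, every undesired critical point `p ≠ p_d` of `V_nav` in
`X_p` satisfies `𝒱_nav(p,0) - min_{θ̄∈Θ} 𝒱_nav(p,θ̄) > (2 r_o ‖p_d - p_o‖/π² - γ_θ/2) θ̄_M²`. -/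
theorem statement_3
    (po pd : E2) (ro ε ϱ rs γθ : ℝ)
    (hro : 0 < ro) (hε : 0 < ε) (hϱ : 0 < ϱ)
    (hpd : pd ∈ Xp po ro ε) (hrs_lb : ε < rs) (hrs_ub : rs < dO po ro pd)
    (Θ : Finset ℝ) (hne : Θ.Nonempty) (hΘ : ∀ t ∈ Θ, 0 < |t| ∧ |t| < π)
    (hγθ₀ : 0 < γθ) (hγθ : γθ < 4 * ro * ‖pd - po‖ / π ^ 2)
    (p : E2) (hp : p ∈ Xp po ro ε) (hppd : p ≠ pd)
    (hcrit : p - pd + ((ϱ * phi' rs (dO po ro p)) / ‖p - po‖) • (p - po) = 0) :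
    (2 * ro * ‖pd - po‖ / π ^ 2 - γθ / 2) * (Θ.sup' hne fun t => |t|) ^ 2
      < Vnav2 po pd ro ϱ rs γθ p 0 - Θ.inf' hne fun t => Vnav2 po pd ro ϱ rs γθ p t := by
  have hpX : ro + ε ≤ ‖p - po‖ := hp
  have hpdX : ro + ε ≤ ‖pd - po‖ := hpd
  have hxpos : 0 < ‖p - po‖ := lt_of_lt_of_le (by linarith) hpX
  have hNpos : 0 < ‖pd - po‖ := lt_of_lt_of_le (by linarith) hpdX
  have hzpos : 0 < dO po ro p := by unfold dO; linarith
  set c : ℝ := (ϱ * phi' rs (dO po ro p)) / ‖p - po‖ with hc_def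
  have hφ' : phi' rs (dO po ro p) ≤ 0 := aux_phi'_nonpos _ _ hzpos
  have hc_le : c ≤ 0 :=
    div_nonpos_of_nonpos_of_nonneg (mul_nonpos_of_nonneg_of_nonpos hϱ.le hφ') hxpos.le
  have hsub : p - pd = (-c) • (p - po) := by
    have := eq_neg_of_add_eq_zero_left hcrit
    rw [this, neg_smul]
  have hc_ne : c ≠ 0 := by
    intro h
    apply hppd
    have : p - pd = 0 := by rw [hsub, h, neg_zero, zero_smul]
    exact sub_eq_zero.mp this
  have hc_neg : c < 0 := lt_of_le_of_ne hc_le hc_ne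
  -- d_o(p) ≤ rs
  have hdle : dO po ro p ≤ rs := by
    by_contra h
    apply hc_ne
    rw [hc_def, phi', if_neg h, mul_zero, zero_div]
  have hxle : ‖p - po‖ ≤ rs + ro := by unfold dO at hdle; linarith
  have hNd : rs + ro < ‖pd - po‖ := by unfold dO at hrs_ub; linarith
  have hxltN : ‖p - po‖ < ‖pd - po‖ := lt_of_le_of_lt hxle hNd
  set μ : ℝ := 1 + c with hμ_def
  have hpd_po : pd - po = μ • (p - po) := by
    have h1 : pd - po = (p - po) - (p - pd) := by abel
    rw [h1, hsub, show μ = 1 - (-c) by rw [hμ_def]; ring, sub_smul, one_smul]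
  have habs : ‖pd - po‖ = |μ| * ‖p - po‖ := by
    rw [hpd_po, norm_smul, Real.norm_eq_abs]
  have habs_gt : 1 < |μ| := by
    by_contra h
    push_neg at h
    have : |μ| * ‖p - po‖ ≤ 1 * ‖p - po‖ :=
      mul_le_mul_of_nonneg_right h hxpos.le
    rw [one_mul] at this
    linarith [habs ▸ this, hxltN]
  have hμlt : μ < 1 := by rw [hμ_def]; linarith
  have hμneg : μ < 0 := by
    rcases abs_cases μ with ⟨h, _⟩ | ⟨_, h⟩
    · linarith [habs_gt, h ▸ habs_gt]
    · linarith
  have hμnorm : ‖pd - po‖ = -μ * ‖p - po‖ := by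
    rw [habs, abs_of_neg hμneg]
  -- squared distance formula
  have hTsq : ∀ θ : ℝ, ‖Tmap po p θ - pd‖ ^ 2
      = ‖p - po‖ ^ 2 - 2 * (μ * (Real.cos θ * ‖p - po‖ ^ 2)) + ‖pd - po‖ ^ 2 := by
    intro θ
    have hT : Tmap po p θ - pd = mulV (RotM θ) (p - po) - (pd - po) := by
      unfold Tmap; abel
    rw [hT, norm_sub_sq_real]
    have h1 : ‖mulV (RotM θ) (p - po)‖ ^ 2 = ‖p - po‖ ^ 2 := by
      rw [← real_inner_self_eq_norm_sq, aux_inner_rot_self, aux_normsq_coord]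
    have h2 : ⟪mulV (RotM θ) (p - po), pd - po⟫ = μ * (Real.cos θ * ‖p - po‖ ^ 2) := by
      rw [hpd_po, real_inner_smul_right, aux_inner_rot, aux_normsq_coord]
      ring
    rw [h1, h2]
  have hgap : ∀ θ : ℝ, Vnav2 po pd ro ϱ rs γθ p 0 - Vnav2 po pd ro ϱ rs γθ p θ
      = (1 - Real.cos θ) * (‖pd - po‖ * ‖p - po‖) - (γθ / 2) * θ ^ 2 := by
    intro θ
    unfold Vnav2
    rw [hTsq θ, hTsq 0, Real.cos_zero, hμnorm]
    ring
  -- pick the maximizer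
  obtain ⟨t0, ht0mem, ht0⟩ := Finset.exists_mem_eq_sup' hne (fun t => |t|)
  obtain ⟨ht0pos, ht0lt⟩ := hΘ t0 ht0mem
  have hinf : (Θ.inf' hne fun t => Vnav2 po pd ro ϱ rs γθ p t)
      ≤ Vnav2 po pd ro ϱ rs γθ p t0 := Finset.inf'_le _ ht0mem
  rw [ht0]
  have hjord : 2 * |t0| ^ 2 / π ^ 2 ≤ 1 - Real.cos |t0| := aux_jordan |t0| (abs_nonneg _) ht0lt.le
  have hcos : Real.cos t0 = Real.cos |t0| := (Real.cos_abs t0).symm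
  have key : (2 * ro * ‖pd - po‖ / π ^ 2 - γθ / 2) * |t0| ^ 2
      < Vnav2 po pd ro ϱ rs γθ p 0 - Vnav2 po pd ro ϱ rs γθ p t0 := by
    rw [hgap t0]
    have hπ : 0 < π := Real.pi_pos
    have ht0sq : 0 < |t0| ^ 2 := by positivity
    have hone : 0 ≤ 1 - Real.cos |t0| := le_trans (by positivity) hjord
    have step1 : (2 * |t0| ^ 2 / π ^ 2) * (‖pd - po‖ * (ro + ε))
        ≤ (1 - Real.cos |t0|) * (‖pd - po‖ * ‖p - po‖) := by
      apply mul_le_mul hjord (mul_le_mul_of_nonneg_left hpX hNpos.le) (by positivity) hone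
    have step2 : (2 * |t0| ^ 2 / π ^ 2) * (‖pd - po‖ * ro)
        < (2 * |t0| ^ 2 / π ^ 2) * (‖pd - po‖ * (ro + ε)) := by
      apply mul_lt_mul_of_pos_left _ (by positivity)
      nlinarith
    have heq : (2 * ro * ‖pd - po‖ / π ^ 2 - γθ / 2) * |t0| ^ 2 + (γθ / 2) * t0 ^ 2
        = (2 * |t0| ^ 2 / π ^ 2) * (‖pd - po‖ * ro) := by
      rw [sq_abs]; field_simp; ring
    rw [hcos]
    linarith [step1, step2, heq]
  have ht0abs : t0 ^ 2 = |t0| ^ 2 := (sq_abs t0).symm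
  linarith [key, hinf]
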